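/- Let m_T < m < 1. Then there exist x₁, x₂ ∈ [0, 2π] with x₁ ≠ x₂ such that γ_w(x₁|m) = γ_w(x₂|m). -/

import Mathlib

open Real MeasureTheory Set

noncomputable section

abbrev E2 := EuclideanSpace ℝ (Fin 2)

/-- The point of the Euclidean plane with coordinates `(a, b)`. -/
def mkE2 (a b : ℝ) : E2 := WithLp.toLp 2 ![a, b]
/-- Incomplete elliptic integral of the first kind `F(x,m)`. -/
def Fell (x m : ℝ) : ℝ := ∫ θ in (0:ℝ)..x, 1 / Real.sqrt (1 - m * Real.sin θ ^ 2)

/-- Incomplete elliptic integral of the second kind `E(x,m)`. -/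
def Eell (x m : ℝ) : ℝ := ∫ θ in (0:ℝ)..x, Real.sqrt (1 - m * Real.sin θ ^ 2)

/-- Complete elliptic integral of the first kind `K(m)`. -/
def Kc (m : ℝ) : ℝ := Fell (Real.pi / 2) m

/-- Complete elliptic integral of the second kind `E(m)`. -/
def Ec (m : ℝ) : ℝ := Eell (Real.pi / 2) m

/-- `α(m) = arcsin √(1/(2m))`. -/
def alph (m : ℝ) : ℝ := Real.arcsin (Real.sqrt (1 / (2 * m)))

/-- `G(x,m) = ∫₀ˣ (1 − 2m sin²θ)(1 − m sin²θ)^{−1/2} dθ = 2E(x,m) − F(x,m)`. -/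
def Gw (x m : ℝ) : ℝ :=
  ∫ θ in (0:ℝ)..x, (1 - 2 * m * Real.sin θ ^ 2) / Real.sqrt (1 - m * Real.sin θ ^ 2)

/-- `f(m) = ∫₀^{π−α(m)} (1 − 2m sin²θ)(1 − m sin²θ)^{−1/2} dθ`; its unique zero is `m_T`. -/
def fT (m : ℝ) : ℝ := Gw (Real.pi - alph m) m
/-- The wavelike parametrization `γ_w(x|m) = (G(x,m), −2√m cos x)`. -/
def gammaW (m : ℝ) : ℝ → E2 := fun x => mkE2 (Gw x m) (-2 * Real.sqrt m * Real.cos x)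

namespace Stmt12Aux

/-- The integrand of `Gw`. -/
def gg (m : ℝ) : ℝ → ℝ :=
  fun θ => (1 - 2 * m * Real.sin θ ^ 2) / Real.sqrt (1 - m * Real.sin θ ^ 2)

lemma Gw_eq (x m : ℝ) : Gw x m = ∫ θ in (0:ℝ)..x, gg m θ := rfl

lemma gg_pi_sub (m θ : ℝ) : gg m (Real.pi - θ) = gg m θ := by
  simp [gg, Real.sin_pi_sub]

lemma gg_periodic (m : ℝ) : Function.Periodic (gg m) Real.pi := by
  intro θ
  simp [gg, Real.sin_add_pi, neg_sq]

lemma gg_two_pi_sub (m θ : ℝ) : gg m (2 * Real.pi - θ) = gg m θ := by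
  have h : 2 * Real.pi - θ = (Real.pi - θ) + Real.pi := by ring
  rw [h, gg_periodic m (Real.pi - θ), gg_pi_sub]

lemma denom_pos {m : ℝ} (hm0 : 0 < m) (hm1 : m < 1) (θ : ℝ) :
    0 < 1 - m * Real.sin θ ^ 2 := by
  nlinarith [Real.sin_sq_le_one θ, sq_nonneg (Real.sin θ)]

lemma gg_cont {m : ℝ} (hm0 : 0 < m) (hm1 : m < 1) : Continuous (gg m) := by
  apply Continuous.div (by continuity) (by continuity)
  intro θ
  exact ne_of_gt (Real.sqrt_pos.mpr (denom_pos hm0 hm1 θ))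

lemma gg_int {m : ℝ} (hm0 : 0 < m) (hm1 : m < 1) (a b : ℝ) :
    IntervalIntegrable (gg m) volume a b :=
  (gg_cont hm0 hm1).intervalIntegrable a b

lemma Gw_continuous {m : ℝ} (hm0 : 0 < m) (hm1 : m < 1) :
    Continuous (fun x => Gw x m) := by
  simp only [Gw_eq]
  exact intervalIntegral.continuous_primitive (gg_int hm0 hm1) 0

lemma Gw_sub {m : ℝ} (hm0 : 0 < m) (hm1 : m < 1) (x y : ℝ) :
    (∫ θ in x..y, gg m θ) = Gw y m - Gw x m := by
  rw [Gw_eq, Gw_eq,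
    intervalIntegral.integral_interval_sub_left (gg_int hm0 hm1 0 y) (gg_int hm0 hm1 0 x)]

lemma Gw_pi_sub_int {m : ℝ} (x : ℝ) :
    (∫ θ in (Real.pi - x)..Real.pi, gg m θ) = Gw x m := by
  calc (∫ θ in (Real.pi - x)..Real.pi, gg m θ)
      = ∫ θ in (Real.pi - x)..(Real.pi - 0), gg m θ := by rw [sub_zero]
    _ = ∫ θ in (0:ℝ)..x, gg m (Real.pi - θ) :=
        (intervalIntegral.integral_comp_sub_left (gg m) Real.pi).symm
    _ = ∫ θ in (0:ℝ)..x, gg m θ := by simp only [gg_pi_sub]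
    _ = Gw x m := (Gw_eq x m).symm

lemma Gw_two_pi_sub_int {m : ℝ} (x : ℝ) :
    (∫ θ in (2 * Real.pi - x)..(2 * Real.pi), gg m θ) = Gw x m := by
  calc (∫ θ in (2 * Real.pi - x)..(2 * Real.pi), gg m θ)
      = ∫ θ in (2 * Real.pi - x)..(2 * Real.pi - 0), gg m θ := by rw [sub_zero]
    _ = ∫ θ in (0:ℝ)..x, gg m (2 * Real.pi - θ) :=
        (intervalIntegral.integral_comp_sub_left (gg m) (2 * Real.pi)).symm
    _ = ∫ θ in (0:ℝ)..x, gg m θ := by simp only [gg_two_pi_sub]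
    _ = Gw x m := (Gw_eq x m).symm

lemma Gw_twopi_sub {m : ℝ} (hm0 : 0 < m) (hm1 : m < 1) (x : ℝ) :
    Gw (2 * Real.pi - x) m = Gw (2 * Real.pi) m - Gw x m := by
  have h := Gw_sub hm0 hm1 (2 * Real.pi - x) (2 * Real.pi)
  rw [Gw_two_pi_sub_int x] at h
  linarith

lemma Gw_twopi {m : ℝ} (hm0 : 0 < m) (hm1 : m < 1) :
    Gw (2 * Real.pi) m = 2 * Gw Real.pi m := by
  have h := Gw_sub hm0 hm1 Real.pi (2 * Real.pi)
  have h2 : (∫ θ in Real.pi..(2 * Real.pi), gg m θ)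
      = ∫ θ in (0:ℝ)..Real.pi, gg m θ := by
    have := (gg_periodic m).intervalIntegral_add_eq Real.pi 0
    simpa [two_mul] using this
  rw [h2, ← Gw_eq] at h
  linarith

lemma key_mono {u v : ℝ} (hu : 0 < u) (huv : u ≤ v) :
    (2 * u - 1) / Real.sqrt u ≤ (2 * v - 1) / Real.sqrt v := by
  have hv : 0 < v := lt_of_lt_of_le hu huv
  have hsu : 0 < Real.sqrt u := Real.sqrt_pos.mpr hu
  have hsv : 0 < Real.sqrt v := Real.sqrt_pos.mpr hv
  have h1 : (2 * u - 1) / Real.sqrt u = 2 * Real.sqrt u - 1 / Real.sqrt u := by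
    rw [div_eq_iff hsu.ne', sub_mul, div_mul_cancel₀ _ hsu.ne', mul_assoc,
      Real.mul_self_sqrt hu.le]
  have h2 : (2 * v - 1) / Real.sqrt v = 2 * Real.sqrt v - 1 / Real.sqrt v := by
    rw [div_eq_iff hsv.ne', sub_mul, div_mul_cancel₀ _ hsv.ne', mul_assoc,
      Real.mul_self_sqrt hv.le]
  rw [h1, h2]
  have hsle : Real.sqrt u ≤ Real.sqrt v := Real.sqrt_le_sqrt huv
  exact sub_le_sub (by linarith) (one_div_le_one_div_of_le hsu hsle)

lemma gg_le {μ m : ℝ} (hμ : 0 < μ) (hμm : μ ≤ m) (hm1 : m < 1) (θ : ℝ) :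
    gg m θ ≤ gg μ θ := by
  have hs0 : (0 : ℝ) ≤ Real.sin θ ^ 2 := sq_nonneg _
  have hu : 0 < 1 - m * Real.sin θ ^ 2 := denom_pos (lt_of_lt_of_le hμ hμm) hm1 θ
  have huv : 1 - m * Real.sin θ ^ 2 ≤ 1 - μ * Real.sin θ ^ 2 := by nlinarith
  have e1 : 1 - 2 * m * Real.sin θ ^ 2 = 2 * (1 - m * Real.sin θ ^ 2) - 1 := by ring
  have e2 : 1 - 2 * μ * Real.sin θ ^ 2 = 2 * (1 - μ * Real.sin θ ^ 2) - 1 := by ring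
  show (1 - 2 * m * Real.sin θ ^ 2) / Real.sqrt (1 - m * Real.sin θ ^ 2)
      ≤ (1 - 2 * μ * Real.sin θ ^ 2) / Real.sqrt (1 - μ * Real.sin θ ^ 2)
  rw [e1, e2]
  exact key_mono hu huv

end Stmt12Aux

open Stmt12Aux in
/-- Lemma 2.19: for `m_T < m < 1` the wavelike parametrization has a
self-intersection with parameters in `[0, 2π]`. -/
theorem stmt12 (mT : ℝ) (hmT : mT ∈ Set.Ioo (1/2 : ℝ) 1) (hmTzero : fT mT = 0)
    (m : ℝ) (hm0 : mT < m) (hm1 : m < 1) :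
    ∃ x₁ ∈ Set.Icc (0:ℝ) (2 * Real.pi), ∃ x₂ ∈ Set.Icc (0:ℝ) (2 * Real.pi),
      x₁ ≠ x₂ ∧ gammaW m x₁ = gammaW m x₂ := by
  obtain ⟨hmT1, hmT2⟩ := hmT
  have hpi := Real.pi_pos
  have hmTpos : (0:ℝ) < mT := by linarith
  have hmpos : (0:ℝ) < m := by linarith
  -- facts about alph m and alph mT
  have hfrac_pos : (0:ℝ) < 1 / (2 * m) := by positivity
  have hfracT_pos : (0:ℝ) < 1 / (2 * mT) := by positivity
  have hfrac_lt : 1 / (2 * m) < 1 := by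
    rw [div_lt_one (by linarith)]; linarith
  have hfracT_lt : 1 / (2 * mT) < 1 := by
    rw [div_lt_one (by linarith)]; linarith
  have hsq_lt : Real.sqrt (1 / (2 * m)) < 1 := by
    have := Real.sqrt_lt_sqrt hfrac_pos.le hfrac_lt
    simpa using this
  have hsqT_lt : Real.sqrt (1 / (2 * mT)) < 1 := by
    have := Real.sqrt_lt_sqrt hfracT_pos.le hfracT_lt
    simpa using this
  have ha_pos : 0 < alph m := Real.arcsin_pos.mpr (Real.sqrt_pos.mpr hfrac_pos)
  have hA_pos : 0 < alph mT := Real.arcsin_pos.mpr (Real.sqrt_pos.mpr hfracT_pos)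
  have ha_lt : alph m < Real.pi / 2 := Real.arcsin_lt_pi_div_two.mpr hsq_lt
  have hA_lt : alph mT < Real.pi / 2 := Real.arcsin_lt_pi_div_two.mpr hsqT_lt
  have hsin_a : Real.sin (alph m) = Real.sqrt (1 / (2 * m)) :=
    Real.sin_arcsin (by linarith [Real.sqrt_nonneg (1 / (2 * m))]) hsq_lt.le
  have hsin_a_sq : Real.sin (alph m) ^ 2 = 1 / (2 * m) := by
    rw [hsin_a, Real.sq_sqrt hfrac_pos.le]
  have haA : alph m < alph mT := by
    apply Real.strictMonoOn_arcsin
      ⟨by linarith [Real.sqrt_nonneg (1 / (2 * m))], hsq_lt.le⟩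
      ⟨by linarith [Real.sqrt_nonneg (1 / (2 * mT))], hsqT_lt.le⟩
    apply Real.sqrt_lt_sqrt hfrac_pos.le
    rw [div_lt_div_iff₀ (by linarith) (by linarith)]
    linarith
  -- monotonicity of sin on [-π/2, π/2]
  have hsin_mono : ∀ {s t : ℝ}, -(Real.pi/2) ≤ s → s ≤ t → t ≤ Real.pi/2 →
      Real.sin s ≤ Real.sin t := by
    intro s t hs hst ht
    exact Real.strictMonoOn_sin.monotoneOn ⟨hs, by linarith⟩ ⟨by linarith, ht⟩ hst
  -- pointwise nonnegativity of gg m on [0, alph m]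
  have hpt_nonneg : ∀ θ ∈ Icc (0:ℝ) (alph m), 0 ≤ gg m θ := by
    intro θ hθ
    have hsθ : Real.sin θ ≤ Real.sin (alph m) :=
      hsin_mono (by linarith [hθ.1]) hθ.2 ha_lt.le
    have hsθ0 : 0 ≤ Real.sin θ :=
      Real.sin_nonneg_of_nonneg_of_le_pi hθ.1 (by linarith [hθ.2])
    have hsq : Real.sin θ ^ 2 ≤ 1 / (2 * m) := by
      rw [← hsin_a_sq]; exact pow_le_pow_left₀ hsθ0 hsθ 2
    have he : 2 * m * (1 / (2 * m)) = 1 := by field_simp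
    have h2 := mul_le_mul_of_nonneg_left hsq (by linarith : (0:ℝ) ≤ 2 * m)
    have hnum : 0 ≤ 1 - 2 * m * Real.sin θ ^ 2 := by linarith
    exact div_nonneg hnum (Real.sqrt_nonneg _)
  -- pointwise nonpositivity of gg m on [π - alph mT, π - alph m]
  have hpt_nonpos : ∀ θ ∈ Icc (Real.pi - alph mT) (Real.pi - alph m), gg m θ ≤ 0 := by
    intro θ hθ
    have h1 : Real.sin (alph m) ≤ Real.sin (Real.pi - θ) :=
      hsin_mono (by linarith) (by linarith [hθ.2]) (by linarith [hθ.1])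
    rw [Real.sin_pi_sub] at h1
    have hsa0 : 0 ≤ Real.sin (alph m) := by rw [hsin_a]; positivity
    have hsq : 1 / (2 * m) ≤ Real.sin θ ^ 2 := by
      rw [← hsin_a_sq]; exact pow_le_pow_left₀ hsa0 h1 2
    have hnum : 1 - 2 * m * Real.sin θ ^ 2 ≤ 0 := by
      have he : 2 * m * (1 / (2 * m)) = 1 := by field_simp
      have h2 := mul_le_mul_of_nonneg_left hsq (by linarith : (0:ℝ) ≤ 2 * m)
      linarith
    exact div_nonpos_of_nonpos_of_nonneg hnum (Real.sqrt_nonneg _)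
  -- f(m) ≤ 0
  have hfm : fT m ≤ 0 := by
    have hsplit := intervalIntegral.integral_add_adjacent_intervals
      (gg_int hmpos hm1 0 (Real.pi - alph mT))
      (gg_int hmpos hm1 (Real.pi - alph mT) (Real.pi - alph m))
    have h1 : (∫ θ in (0:ℝ)..(Real.pi - alph mT), gg m θ)
        ≤ ∫ θ in (0:ℝ)..(Real.pi - alph mT), gg mT θ := by
      apply intervalIntegral.integral_mono_on (by linarith)
        (gg_int hmpos hm1 _ _) (gg_int hmTpos hmT2 _ _)
      intro θ _
      exact gg_le hmTpos hm0.le hm1 θ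
    have h1' : (∫ θ in (0:ℝ)..(Real.pi - alph mT), gg mT θ) = 0 := by
      rw [← Gw_eq]; exact hmTzero
    have h2 : (∫ θ in (Real.pi - alph mT)..(Real.pi - alph m), gg m θ) ≤ 0 := by
      rw [← neg_nonneg, ← intervalIntegral.integral_neg]
      apply intervalIntegral.integral_nonneg (by linarith)
      intro u hu
      simpa using hpt_nonpos u hu
    show Gw (Real.pi - alph m) m ≤ 0
    rw [Gw_eq, ← hsplit]
    linarith
  -- Gw π m = Gw (π - alph m) m + Gw (alph m) m
  have hGpi : Gw Real.pi m = Gw (Real.pi - alph m) m + Gw (alph m) m := by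
    have h1 := Gw_sub hmpos hm1 (Real.pi - alph m) Real.pi
    have h2 := Gw_pi_sub_int (m := m) (alph m)
    linarith [h1, h2.symm.trans h1]
  have hGa_nonneg : 0 ≤ Gw (alph m) m := by
    rw [Gw_eq]
    exact intervalIntegral.integral_nonneg ha_pos.le hpt_nonneg
  -- intermediate value theorem
  have hIcc : alph m ≤ Real.pi - alph m := by linarith
  have hfm' : Gw (Real.pi - alph m) m ≤ 0 := hfm
  have hmem : Gw Real.pi m ∈ Icc (Gw (Real.pi - alph m) m) (Gw (alph m) m) :=
    ⟨by linarith, by linarith⟩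
  obtain ⟨x, hxmem, hGx⟩ :=
    intermediate_value_Icc' hIcc (Gw_continuous hmpos hm1).continuousOn hmem
  have hx0 : 0 ≤ x := le_trans ha_pos.le hxmem.1
  have hxpi : x < Real.pi := lt_of_le_of_lt hxmem.2 (by linarith)
  have hGx' : Gw x m = Gw Real.pi m := hGx
  have hGx2 : Gw (2 * Real.pi - x) m = Gw x m := by
    rw [Gw_twopi_sub hmpos hm1, Gw_twopi hmpos hm1, hGx']
    ring
  have hcos : Real.cos (2 * Real.pi - x) = Real.cos x := by
    rw [Real.cos_sub]
    simp [Real.cos_two_pi, Real.sin_two_pi]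
  refine ⟨x, ⟨hx0, by linarith⟩, 2 * Real.pi - x, ⟨by linarith, by linarith⟩, ?_, ?_⟩
  · intro h
    have : x = Real.pi := by linarith
    linarith
  · show gammaW m x = gammaW m (2 * Real.pi - x)
    simp only [gammaW]
    rw [hGx2, hcos]
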